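/- For every real ε with 0 < ε < 1/2, the space W = {(z,w) ∈ ℂ³ × ℂ³ : z·w = 0, ‖z‖² + ‖w‖² = 1, and (‖z‖² < ε or ‖w‖² < ε)}, with the subspace topology, is homotopy equivalent to the disjoint union of two copies of the 5-sphere {w ∈ ℂ³ : ‖w‖ = 1}. -/

import Mathlib

/-- `ℂ³` with its Hermitian norm. -/
noncomputable abbrev C3 := EuclideanSpace ℂ (Fin 3)

/-- The bilinear dot product `z·w = z₁w₁ + z₂w₂ + z₃w₃` (no complex conjugation). -/
noncomputable def dotProd (z w : C3) : ℂ := ∑ i, z i * w i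

/-- The space `W`, depending on `ε`. -/
def spaceW (ε : ℝ) : Set (C3 × C3) :=
  {p | dotProd p.1 p.2 = 0 ∧ ‖p.1‖ ^ 2 + ‖p.2‖ ^ 2 = 1 ∧ (‖p.1‖ ^ 2 < ε ∨ ‖p.2‖ ^ 2 < ε)}

/- ### Auxiliary lemmas -/

theorem continuous_dite_clopen {X Y : Type*} [TopologicalSpace X] [TopologicalSpace Y]
    {p : X → Prop} [DecidablePred p]
    {f : {x // p x} → Y} {g : {x // ¬ p x} → Y}
    (hf : Continuous f) (hg : Continuous g)
    (hpo : IsOpen {x | p x}) (hpc : IsOpen {x | ¬ p x}) :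
    Continuous fun x => if h : p x then f ⟨x, h⟩ else g ⟨x, h⟩ := by
  rw [continuous_def]
  intro V hV
  have h1 : IsOpen (Subtype.val '' (f ⁻¹' V)) := by
    obtain ⟨O, hO, hOeq⟩ := isOpen_induced_iff.mp (hf.isOpen_preimage V hV)
    rw [← hOeq, Set.image_preimage_eq_inter_range, Subtype.range_coe_subtype]
    exact hO.inter hpo
  have h2 : IsOpen (Subtype.val '' (g ⁻¹' V)) := by
    obtain ⟨O, hO, hOeq⟩ := isOpen_induced_iff.mp (hg.isOpen_preimage V hV)
    rw [← hOeq, Set.image_preimage_eq_inter_range, Subtype.range_coe_subtype]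
    exact hO.inter hpc
  have heq : (fun x => if h : p x then f ⟨x, h⟩ else g ⟨x, h⟩) ⁻¹' V
      = Subtype.val '' (f ⁻¹' V) ∪ Subtype.val '' (g ⁻¹' V) := by
    ext x
    by_cases hx : p x
    · simp only [Set.mem_preimage, dif_pos hx, Set.mem_union, Set.mem_image]
      constructor
      · intro h; exact Or.inl ⟨⟨x, hx⟩, h, rfl⟩
      · rintro (⟨⟨y, hy⟩, hyV, rfl⟩ | ⟨⟨y, hy⟩, hyV, rfl⟩)
        · exact hyV
        · exact absurd hx hy
    · simp only [Set.mem_preimage, dif_neg hx, Set.mem_union, Set.mem_image]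
      constructor
      · intro h; exact Or.inr ⟨⟨x, hx⟩, h, rfl⟩
      · rintro (⟨⟨y, hy⟩, hyV, rfl⟩ | ⟨⟨y, hy⟩, hyV, rfl⟩)
        · exact absurd hy hx
        · exact hyV
  rw [heq]
  exact h1.union h2

lemma dotProd_comm (z w : C3) : dotProd z w = dotProd w z := by simp [dotProd, mul_comm]

lemma dotProd_smul_smul (r s : ℝ) (z w : C3) :
    dotProd (r • z) (s • w) = (r * s) • dotProd z w := by
  unfold dotProd
  rw [Finset.smul_sum]
  refine Finset.sum_congr rfl fun i _ => ?_
  simp [PiLp.smul_apply, Complex.real_smul]; ring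

lemma smul_norm_sq (r : ℝ) (v : C3) : ‖r • v‖^2 = r^2 * ‖v‖^2 := by
  rw [norm_smul, mul_pow, Real.norm_eq_abs, sq_abs]

lemma mem_sphere_nrm {v : C3} (hv : v ≠ 0) : ‖v‖⁻¹ • v ∈ Metric.sphere (0:C3) 1 := by
  rw [mem_sphere_zero_iff_norm, norm_smul, Real.norm_eq_abs, abs_of_nonneg (by positivity),
    inv_mul_cancel₀ (norm_ne_zero_iff.mpr hv)]

variable {ε : ℝ}

lemma spaceW_swap {p : C3 × C3} (h : p ∈ spaceW ε) : ((p.2, p.1) : C3 × C3) ∈ spaceW ε := by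
  obtain ⟨h1, h2, h3⟩ := h
  exact ⟨by rwa [dotProd_comm], by linarith, h3.symm⟩

lemma hw_big (hε1 : ε < 1/2) {q : C3 × C3} (hq : q ∈ spaceW ε) (h : ‖q.1‖^2 < ε) :
    (1:ℝ)/2 < ‖q.2‖^2 := by
  obtain ⟨-, h2, -⟩ := hq; nlinarith

lemma dichotomy (hε1 : ε < 1/2) {q : C3 × C3} (hq : q ∈ spaceW ε) (h : ¬ ‖q.1‖^2 < ε) :
    ‖q.2‖^2 < ε := by
  obtain ⟨-, h2, h3⟩ := hq
  rcases h3 with h3 | h3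
  · exact absurd h3 h
  · exact h3

lemma hz_big (hε1 : ε < 1/2) {q : C3 × C3} (hq : q ∈ spaceW ε) (h : ¬ ‖q.1‖^2 < ε) :
    (1:ℝ)/2 < ‖q.1‖^2 := by
  have h3 := dichotomy hε1 hq h
  obtain ⟨-, h2, -⟩ := hq; nlinarith

lemma ne_zero_of_big {v : C3} (h : (1:ℝ)/2 < ‖v‖^2) : v ≠ 0 := by
  intro hv; rw [hv, norm_zero] at h; norm_num at h

lemma mem_spaceW_left (hε0 : 0 < ε) {w : C3} (hw : w ∈ Metric.sphere (0:C3) 1) :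
    ((0, w) : C3 × C3) ∈ spaceW ε := by
  rw [mem_sphere_zero_iff_norm] at hw
  exact ⟨by simp [dotProd], by simp [hw], Or.inl (by simpa using hε0)⟩

lemma mem_spaceW_right (hε0 : 0 < ε) {z : C3} (hz : z ∈ Metric.sphere (0:C3) 1) :
    ((z, 0) : C3 × C3) ∈ spaceW ε := by
  rw [mem_sphere_zero_iff_norm] at hz
  exact ⟨by simp [dotProd], by simp [hz], Or.inr (by simpa using hε0)⟩

lemma mem_spaceW_scale (hε1 : ε < 1/2) {z w : C3}
    (hdot : dotProd z w = 0) (hsum : ‖z‖^2 + ‖w‖^2 = 1) (hzs : ‖z‖^2 < ε)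
    {t : ℝ} (ht0 : 0 ≤ t) (ht1 : t ≤ 1) :
    ((((Real.sqrt ((1-t)^2*‖z‖^2 + ‖w‖^2))⁻¹ * (1-t)) • z,
      (Real.sqrt ((1-t)^2*‖z‖^2 + ‖w‖^2))⁻¹ • w) : C3 × C3) ∈ spaceW ε := by
  have ha0 : (0:ℝ) ≤ ‖z‖^2 := sq_nonneg _
  have hs0 : (0:ℝ) ≤ (1-t)^2 := sq_nonneg _
  have hs1 : (1-t)^2 ≤ 1 := by nlinarith
  have hε0' : ε < 1 := by linarith
  have hD : (0:ℝ) < (1-t)^2*‖z‖^2 + ‖w‖^2 := by nlinarith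
  refine ⟨?_, ?_, Or.inl ?_⟩
  · rw [dotProd_smul_smul, hdot, smul_zero]
  · rw [smul_norm_sq, smul_norm_sq, mul_pow, inv_pow, Real.sq_sqrt hD.le]
    field_simp
  · rw [smul_norm_sq, mul_pow, inv_pow, Real.sq_sqrt hD.le]
    have he : (((1-t)^2*‖z‖^2 + ‖w‖^2)⁻¹ * (1-t)^2) * ‖z‖^2
        = ((1-t)^2*‖z‖^2) / ((1-t)^2*‖z‖^2 + ‖w‖^2) := by ring
    rw [he, div_lt_iff₀ hD]
    nlinarith [mul_le_mul_of_nonneg_left (mul_le_mul_of_nonneg_right hs1 ha0)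
      (by linarith : (0:ℝ) ≤ 1-ε)]

lemma hD_pos (hε1 : ε < 1/2) {z w : C3} (hsum : ‖z‖^2 + ‖w‖^2 = 1) (hbig : (1:ℝ)/2 < ‖w‖^2)
    (t : ℝ) : (0:ℝ) < (1-t)^2*‖z‖^2 + ‖w‖^2 := by
  nlinarith [sq_nonneg (1-t), sq_nonneg ‖z‖]

/- ### The maps -/

variable (ε) in
/-- The map `W → S⁵ ⊕ S⁵` normalizing the large component. -/
noncomputable def Fmap (hε1 : ε < 1/2) (q : ↥(spaceW ε)) :
    ↥(Metric.sphere (0:C3) 1) ⊕ ↥(Metric.sphere (0:C3) 1) :=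
  if h : ‖(q : C3 × C3).1‖^2 < ε then
    Sum.inl ⟨‖(q : C3 × C3).2‖⁻¹ • (q : C3 × C3).2,
      mem_sphere_nrm (ne_zero_of_big (hw_big hε1 q.2 h))⟩
  else
    Sum.inr ⟨‖(q : C3 × C3).1‖⁻¹ • (q : C3 × C3).1,
      mem_sphere_nrm (ne_zero_of_big (hz_big hε1 q.2 h))⟩

variable (ε) in
/-- The map `S⁵ ⊕ S⁵ → W`. -/
noncomputable def Gmap (hε0 : 0 < ε) :
    ↥(Metric.sphere (0:C3) 1) ⊕ ↥(Metric.sphere (0:C3) 1) → ↥(spaceW ε) :=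
  Sum.elim (fun w => ⟨((0 : C3), (w : C3)), mem_spaceW_left hε0 w.2⟩)
           (fun z => ⟨((z : C3), (0 : C3)), mem_spaceW_right hε0 z.2⟩)

variable (ε) in
/-- The deformation, contracting the small component. -/
noncomputable def Hmap (hε1 : ε < 1/2) (x : unitInterval × ↥(spaceW ε)) : ↥(spaceW ε) :=
  if h : ‖((x.2 : C3 × C3)).1‖^2 < ε then
    ⟨(((Real.sqrt ((1-(x.1:ℝ))^2*‖(x.2:C3×C3).1‖^2 + ‖(x.2:C3×C3).2‖^2))⁻¹ * (1-(x.1:ℝ)))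
        • (x.2:C3×C3).1,
      (Real.sqrt ((1-(x.1:ℝ))^2*‖(x.2:C3×C3).1‖^2 + ‖(x.2:C3×C3).2‖^2))⁻¹ • (x.2:C3×C3).2),
      mem_spaceW_scale hε1 x.2.2.1 x.2.2.2.1 h x.1.2.1 x.1.2.2⟩
  else
    ⟨((Real.sqrt ((1-(x.1:ℝ))^2*‖(x.2:C3×C3).2‖^2 + ‖(x.2:C3×C3).1‖^2))⁻¹ • (x.2:C3×C3).1,
      ((Real.sqrt ((1-(x.1:ℝ))^2*‖(x.2:C3×C3).2‖^2 + ‖(x.2:C3×C3).1‖^2))⁻¹ * (1-(x.1:ℝ)))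
        • (x.2:C3×C3).2),
      spaceW_swap (mem_spaceW_scale hε1 (by rw [dotProd_comm]; exact x.2.2.1)
        (by linarith [x.2.2.2.1]) (dichotomy hε1 x.2.2 h) x.1.2.1 x.1.2.2)⟩

/- ### Continuity -/

lemma isOpen_pred (hε1 : ε < 1/2) :
    IsOpen {q : ↥(spaceW ε) | ‖(q : C3 × C3).1‖^2 < ε} :=
  isOpen_lt (((continuous_fst.comp continuous_subtype_val).norm).pow 2) continuous_const

lemma isOpen_npred (hε1 : ε < 1/2) :
    IsOpen {q : ↥(spaceW ε) | ¬ ‖(q : C3 × C3).1‖^2 < ε} := by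
  have : {q : ↥(spaceW ε) | ¬ ‖(q : C3 × C3).1‖^2 < ε}
      = {q : ↥(spaceW ε) | ‖(q : C3 × C3).2‖^2 < ε} := by
    ext q
    exact ⟨fun h => dichotomy hε1 q.2 h,
      fun h hlt => by have := hw_big hε1 q.2 hlt; simp only [Set.mem_setOf_eq] at h; linarith⟩
  rw [this]
  exact isOpen_lt (((continuous_snd.comp continuous_subtype_val).norm).pow 2) continuous_const

variable (ε) in
lemma cont_F (hε1 : ε < 1/2) : Continuous (Fmap ε hε1) := by
  unfold Fmap
  refine continuous_dite_clopen
    (f := fun y : {q : ↥(spaceW ε) // ‖(q : C3 × C3).1‖^2 < ε} =>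
      (Sum.inl ⟨‖((y.1 : C3 × C3)).2‖⁻¹ • ((y.1 : C3 × C3)).2,
      mem_sphere_nrm (ne_zero_of_big (hw_big hε1 y.1.2 y.2))⟩ :
        ↥(Metric.sphere (0:C3) 1) ⊕ ↥(Metric.sphere (0:C3) 1)))
    (g := fun y : {q : ↥(spaceW ε) // ¬ ‖(q : C3 × C3).1‖^2 < ε} =>
      (Sum.inr ⟨‖((y.1 : C3 × C3)).1‖⁻¹ • ((y.1 : C3 × C3)).1,
      mem_sphere_nrm (ne_zero_of_big (hz_big hε1 y.1.2 y.2))⟩ :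
        ↥(Metric.sphere (0:C3) 1) ⊕ ↥(Metric.sphere (0:C3) 1)))
    ?_ ?_ (isOpen_pred hε1) (isOpen_npred hε1)
  · have hw : Continuous fun y : {q : ↥(spaceW ε) // ‖(q : C3 × C3).1‖^2 < ε} =>
        ((y.1 : C3 × C3)).2 :=
      continuous_snd.comp (continuous_subtype_val.comp continuous_subtype_val)
    exact continuous_inl.comp (Continuous.subtype_mk
      ((Continuous.inv₀ hw.norm fun y =>
        norm_ne_zero_iff.mpr (ne_zero_of_big (hw_big hε1 y.1.2 y.2))).smul hw) _)
  · have hz : Continuous fun y : {q : ↥(spaceW ε) // ¬ ‖(q : C3 × C3).1‖^2 < ε} =>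
        ((y.1 : C3 × C3)).1 :=
      continuous_fst.comp (continuous_subtype_val.comp continuous_subtype_val)
    exact continuous_inr.comp (Continuous.subtype_mk
      ((Continuous.inv₀ hz.norm fun y =>
        norm_ne_zero_iff.mpr (ne_zero_of_big (hz_big hε1 y.1.2 y.2))).smul hz) _)

variable (ε) in
lemma cont_G (hε0 : 0 < ε) : Continuous (Gmap ε hε0) := by
  unfold Gmap
  exact Continuous.sumElim
    ((continuous_const.prodMk continuous_subtype_val).subtype_mk _)
    ((continuous_subtype_val.prodMk continuous_const).subtype_mk _)

set_option maxHeartbeats 1000000 in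
variable (ε) in
lemma cont_H (hε1 : ε < 1/2) : Continuous (Hmap ε hε1) := by
  unfold Hmap
  refine continuous_dite_clopen
    (f := fun y : {x : unitInterval × ↥(spaceW ε) // ‖((x.2 : C3 × C3)).1‖^2 < ε} => (⟨(((Real.sqrt ((1-((y.1.1 : unitInterval):ℝ))^2*‖((y.1.2:C3×C3)).1‖^2
          + ‖((y.1.2:C3×C3)).2‖^2))⁻¹ * (1-((y.1.1 : unitInterval):ℝ))) • ((y.1.2:C3×C3)).1,
        (Real.sqrt ((1-((y.1.1 : unitInterval):ℝ))^2*‖((y.1.2:C3×C3)).1‖^2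
          + ‖((y.1.2:C3×C3)).2‖^2))⁻¹ • ((y.1.2:C3×C3)).2),
        mem_spaceW_scale hε1 y.1.2.2.1 y.1.2.2.2.1 y.2 y.1.1.2.1 y.1.1.2.2⟩ : ↥(spaceW ε)))
    (g := fun y : {x : unitInterval × ↥(spaceW ε) // ¬ ‖((x.2 : C3 × C3)).1‖^2 < ε} => (⟨((Real.sqrt ((1-((y.1.1 : unitInterval):ℝ))^2*‖((y.1.2:C3×C3)).2‖^2
          + ‖((y.1.2:C3×C3)).1‖^2))⁻¹ • ((y.1.2:C3×C3)).1,
        ((Real.sqrt ((1-((y.1.1 : unitInterval):ℝ))^2*‖((y.1.2:C3×C3)).2‖^2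
          + ‖((y.1.2:C3×C3)).1‖^2))⁻¹ * (1-((y.1.1 : unitInterval):ℝ))) • ((y.1.2:C3×C3)).2),
        spaceW_swap (mem_spaceW_scale hε1 (by rw [dotProd_comm]; exact y.1.2.2.1)
          (by linarith [y.1.2.2.2.1]) (dichotomy hε1 y.1.2.2 y.2) y.1.1.2.1 y.1.1.2.2)⟩ : ↥(spaceW ε)))
    ?_ ?_
    ((isOpen_pred hε1).preimage continuous_snd)
    ((isOpen_npred hε1).preimage continuous_snd)
  · have ht : Continuous fun y : {x : unitInterval × ↥(spaceW ε) //
        ‖((x.2 : C3 × C3)).1‖^2 < ε} => ((y.1.1 : unitInterval) : ℝ) :=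
      continuous_subtype_val.comp (continuous_fst.comp continuous_subtype_val)
    have hq : Continuous fun y : {x : unitInterval × ↥(spaceW ε) //
        ‖((x.2 : C3 × C3)).1‖^2 < ε} => ((y.1.2 : C3 × C3)) :=
      continuous_subtype_val.comp (continuous_snd.comp continuous_subtype_val)
    have hz := continuous_fst.comp hq
    have hw := continuous_snd.comp hq
    have hDc : Continuous fun y : {x : unitInterval × ↥(spaceW ε) //
        ‖((x.2 : C3 × C3)).1‖^2 < ε} =>
        (1-((y.1.1 : unitInterval) : ℝ))^2*‖((y.1.2 : C3 × C3)).1‖^2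
          + ‖((y.1.2 : C3 × C3)).2‖^2 :=
      (((continuous_const.sub ht).pow 2).mul (hz.norm.pow 2)).add (hw.norm.pow 2)
    have hc : Continuous fun y : {x : unitInterval × ↥(spaceW ε) //
        ‖((x.2 : C3 × C3)).1‖^2 < ε} =>
        (Real.sqrt ((1-((y.1.1 : unitInterval) : ℝ))^2*‖((y.1.2 : C3 × C3)).1‖^2
          + ‖((y.1.2 : C3 × C3)).2‖^2))⁻¹ := by
      refine Continuous.inv₀ (Real.continuous_sqrt.comp hDc) fun y => ?_
      exact (Real.sqrt_pos.mpr (hD_pos hε1 y.1.2.2.2.1 (hw_big hε1 y.1.2.2 y.2) _)).ne'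
    exact Continuous.subtype_mk
      (((hc.mul (continuous_const.sub ht)).smul hz).prodMk (hc.smul hw)) _
  · have ht : Continuous fun y : {x : unitInterval × ↥(spaceW ε) //
        ¬ ‖((x.2 : C3 × C3)).1‖^2 < ε} => ((y.1.1 : unitInterval) : ℝ) :=
      continuous_subtype_val.comp (continuous_fst.comp continuous_subtype_val)
    have hq : Continuous fun y : {x : unitInterval × ↥(spaceW ε) //
        ¬ ‖((x.2 : C3 × C3)).1‖^2 < ε} => ((y.1.2 : C3 × C3)) :=
      continuous_subtype_val.comp (continuous_snd.comp continuous_subtype_val)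
    have hz := continuous_fst.comp hq
    have hw := continuous_snd.comp hq
    have hDc : Continuous fun y : {x : unitInterval × ↥(spaceW ε) //
        ¬ ‖((x.2 : C3 × C3)).1‖^2 < ε} =>
        (1-((y.1.1 : unitInterval) : ℝ))^2*‖((y.1.2 : C3 × C3)).2‖^2
          + ‖((y.1.2 : C3 × C3)).1‖^2 :=
      (((continuous_const.sub ht).pow 2).mul (hw.norm.pow 2)).add (hz.norm.pow 2)
    have hc : Continuous fun y : {x : unitInterval × ↥(spaceW ε) //
        ¬ ‖((x.2 : C3 × C3)).1‖^2 < ε} =>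
        (Real.sqrt ((1-((y.1.1 : unitInterval) : ℝ))^2*‖((y.1.2 : C3 × C3)).2‖^2
          + ‖((y.1.2 : C3 × C3)).1‖^2))⁻¹ := by
      refine Continuous.inv₀ (Real.continuous_sqrt.comp hDc) fun y => ?_
      refine (Real.sqrt_pos.mpr (hD_pos hε1 ?_ (hz_big hε1 y.1.2.2 y.2) _)).ne'
      linarith [y.1.2.2.2.1]
    exact Continuous.subtype_mk
      ((hc.smul hz).prodMk ((hc.mul (continuous_const.sub ht)).smul hw)) _

/- ### The theorem -/

theorem W_homotopyEquiv_two_spheres (ε : ℝ) (hε0 : 0 < ε) (hε1 : ε < 1 / 2) :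
    Nonempty (ContinuousMap.HomotopyEquiv (spaceW ε)
      ((Metric.sphere (0 : C3) 1) ⊕ (Metric.sphere (0 : C3) 1))) := by
  have hε1' : ε < 1/2 := hε1
  refine ⟨⟨⟨Fmap ε hε1', cont_F ε hε1'⟩, ⟨Gmap ε hε0, cont_G ε hε0⟩, ?_, ?_⟩⟩
  · -- left_inv : (G ∘ F) homotopic id
    refine (ContinuousMap.Homotopic.symm ⟨?_⟩)
    refine ⟨⟨Hmap ε hε1', cont_H ε hε1'⟩, ?_, ?_⟩
    · -- H(0, q) = q
      intro q
      show Hmap ε hε1' (0, q) = q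
      unfold Hmap
      have hsum := q.2.2.1
      by_cases h : ‖(q : C3 × C3).1‖^2 < ε
      · rw [dif_pos h]
        apply Subtype.ext
        have e0 : ((0 : unitInterval) : ℝ) = 0 := rfl
        simp only [e0, sub_zero, one_pow, one_mul, mul_one, hsum, Real.sqrt_one,
          inv_one, one_smul, Prod.mk.eta]
      · rw [dif_neg h]
        apply Subtype.ext
        have e0 : ((0 : unitInterval) : ℝ) = 0 := rfl
        have hsum2 : ‖(q:C3×C3).2‖^2 + ‖(q:C3×C3).1‖^2 = 1 := by linarith
        simp only [e0, sub_zero, one_pow, one_mul, mul_one, hsum2, Real.sqrt_one,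
          inv_one, one_smul, Prod.mk.eta]
    · -- H(1, q) = G (F q)
      intro q
      show Hmap ε hε1' (1, q) = Gmap ε hε0 (Fmap ε hε1' q)
      unfold Hmap Fmap Gmap
      have e1 : ((1 : unitInterval) : ℝ) = 1 := rfl
      by_cases h : ‖(q : C3 × C3).1‖^2 < ε
      · rw [dif_pos h, dif_pos h]
        apply Subtype.ext
        simp only [e1, sub_self, Sum.elim_inl]
        norm_num [Real.sqrt_sq (norm_nonneg _)]
      · rw [dif_neg h, dif_neg h]
        apply Subtype.ext
        simp only [e1, sub_self, Sum.elim_inr]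
        norm_num [Real.sqrt_sq (norm_nonneg _)]
  · -- right_inv : (F ∘ G) homotopic id
    have : (ContinuousMap.mk (Fmap ε hε1') (cont_F ε hε1')).comp
        (ContinuousMap.mk (Gmap ε hε0) (cont_G ε hε0))
        = ContinuousMap.id _ := by
      apply ContinuousMap.ext
      rintro (w | z)
      · show Fmap ε hε1' ⟨((0:C3), (w:C3)), _⟩ = Sum.inl w
        unfold Fmap
        rw [dif_pos (by simpa using hε0)]
        have hw : ‖(w : C3)‖ = 1 := mem_sphere_zero_iff_norm.mp w.2
        congr 1
        apply Subtype.ext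
        show ‖(w:C3)‖⁻¹ • (w:C3) = (w:C3)
        rw [hw, inv_one, one_smul]
      · show Fmap ε hε1' ⟨((z:C3), (0:C3)), _⟩ = Sum.inr z
        unfold Fmap
        have hz : ‖(z : C3)‖ = 1 := mem_sphere_zero_iff_norm.mp z.2
        rw [dif_neg (by rw [hz]; norm_num; linarith)]
        congr 1
        apply Subtype.ext
        show ‖(z:C3)‖⁻¹ • (z:C3) = (z:C3)
        rw [hz, inv_one, one_smul]
    rw [this]
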